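/- arXiv:2103.03307 — 2 statements merged into one kernel-verified Lean document; each statement's English description precedes it below -/
import Mathlib

section
/- The balance heuristic multiple importance sampling estimator is unbiased: given probability measures Q_1,...,Q_K with densities q_1,...,q_K, a target measure P with density p absolutely continuous w.r.t. each Q_k, and N_k i.i.d. samples z_{1k},...,z_{N_k k} from each Q_k (all mutually independent), the expectation of Σ_{k=1}^K Σ_{i=1}^{N_k} p(z_{ik}) f(z_{ik}) / (Σ_{j=1}^K N_j q_j(z_{ik})) equals E_{z∼P}[f(z)]. -/
open MeasureTheory
open scoped ENNReal NNReal

lemma measurePreserving_eval_pi {ι : Type*} [Fintype ι] {α : ι → Type*}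
    [∀ i, MeasurableSpace (α i)] (μ : ∀ i, Measure (α i))
    [∀ i, IsProbabilityMeasure (μ i)] (i : ι) :
    MeasurePreserving (Function.eval i) (Measure.pi μ) (μ i) := by
  classical
  refine ⟨measurable_pi_apply i, ?_⟩
  ext s hs
  rw [Measure.map_apply (measurable_pi_apply i) hs, Set.eval_preimage, Measure.pi_pi,
    Fintype.prod_eq_single i (fun j hj => by simp [Function.update_of_ne hj])]
  simp

/-- The balance heuristic multiple importance sampling estimator is unbiased. -/
theorem bh_mis_estimator_unbiased
    {Z : Type*} [MeasurableSpace Z] (μ0 : Measure Z)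
    (K : ℕ) (hK : 1 ≤ K)
    (p : Z → ℝ≥0∞) (q : Fin K → Z → ℝ≥0∞)
    (hp : Measurable p) (hq : ∀ k, Measurable (q k))
    (P : Measure Z) (Q : Fin K → Measure Z)
    (hP : P = μ0.withDensity p) (hQ : ∀ k, Q k = μ0.withDensity (q k))
    [IsProbabilityMeasure P] [∀ k, IsProbabilityMeasure (Q k)]
    (hPQ : ∀ k, P ≪ Q k)
    (f : Z → ℝ) (hf : Measurable f) (C : ℝ) (hfb : ∀ z, |f z| ≤ C)
    (N : Fin K → ℕ) (hN : ∀ k, 1 ≤ N k) :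
    ∫ z : (k : Fin K) → Fin (N k) → Z,
        ∑ k : Fin K, ∑ i : Fin (N k),
          ((p (z k i)).toReal * f (z k i)) /
            (∑ j : Fin K, (N j : ℝ) * (q j (z k i)).toReal)
      ∂(Measure.pi fun k : Fin K => Measure.pi fun _ : Fin (N k) => Q k)
      = ∫ z, f z ∂P := by
  classical
  set S : Z → ℝ := fun x => ∑ j : Fin K, (N j : ℝ) * (q j x).toReal with hSdef
  set g : Z → ℝ := fun x => (p x).toReal * f x / S x with hgdef
  set Pm : Measure ((k : Fin K) → Fin (N k) → Z) :=
    Measure.pi fun k : Fin K => Measure.pi fun _ : Fin (N k) => Q k with hPmdef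
  have hSmeas : Measurable S :=
    Finset.measurable_sum _ fun j _ => measurable_const.mul (hq j).ennreal_toReal
  have hgmeas : Measurable g := (hp.ennreal_toReal.mul hf).div hSmeas
  have hSnonneg : ∀ x, 0 ≤ S x := fun x =>
    Finset.sum_nonneg fun j _ => mul_nonneg (Nat.cast_nonneg _) ENNReal.toReal_nonneg
  have hterm_le : ∀ k x, (N k : ℝ) * (q k x).toReal ≤ S x := fun k x =>
    Finset.single_le_sum (f := fun j => (N j : ℝ) * (q j x).toReal)
      (fun j _ => mul_nonneg (Nat.cast_nonneg _) ENNReal.toReal_nonneg)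
      (Finset.mem_univ k)
  have hq_le_S : ∀ k x, (q k x).toReal ≤ S x := by
    intro k x
    have h1 : (1 : ℝ) ≤ (N k : ℝ) := by exact_mod_cast hN k
    calc (q k x).toReal = 1 * (q k x).toReal := (one_mul _).symm
      _ ≤ (N k : ℝ) * (q k x).toReal :=
          mul_le_mul_of_nonneg_right h1 ENNReal.toReal_nonneg
      _ ≤ S x := hterm_le k x
  -- lintegrals are 1
  have hpl : ∫⁻ x, p x ∂μ0 = 1 := by
    have h := measure_univ (μ := P)
    rw [hP, withDensity_apply _ MeasurableSet.univ, setLIntegral_univ] at h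
    exact h
  have hql : ∀ k, ∫⁻ x, q k x ∂μ0 = 1 := by
    intro k
    have h := measure_univ (μ := Q k)
    rw [hQ k, withDensity_apply _ MeasurableSet.univ, setLIntegral_univ] at h
    exact h
  have p_fin : ∀ᵐ x ∂μ0, p x < ∞ :=
    ae_lt_top hp (by rw [hpl]; exact ENNReal.one_ne_top)
  have q_fin : ∀ k, ∀ᵐ x ∂μ0, q k x < ∞ := fun k =>
    ae_lt_top (hq k) (by rw [hql k]; exact ENNReal.one_ne_top)
  have hp_int : Integrable (fun x => (p x).toReal) μ0 :=
    integrable_toReal_of_lintegral_ne_top hp.aemeasurable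
      (by rw [hpl]; exact ENNReal.one_ne_top)
  -- p vanishes a.e. where q k0 vanishes
  set k0 : Fin K := ⟨0, hK⟩ with hk0
  have hpz : ∀ᵐ x ∂μ0, q k0 x = 0 → p x = 0 := by
    have hs0 : MeasurableSet {x | q k0 x = 0} := hq k0 (measurableSet_singleton 0)
    have hQ0 : Q k0 {x | q k0 x = 0} = 0 := by
      rw [hQ k0, withDensity_apply _ hs0]
      have : ∫⁻ x in {x | q k0 x = 0}, q k0 x ∂μ0 = ∫⁻ x in {x | q k0 x = 0}, 0 ∂μ0 :=
        setLIntegral_congr_fun hs0 (fun x hx => hx)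
      rw [this, lintegral_zero]
    have hP0 : P {x | q k0 x = 0} = 0 := hPQ k0 hQ0
    rw [hP, withDensity_apply _ hs0] at hP0
    exact (setLIntegral_eq_zero_iff hs0 hp).1 hP0
  -- integrability of q_k.toReal * g
  have key : ∀ k x, (q k x).toReal * |g x| ≤ (p x).toReal * |C| := by
    intro k x
    by_cases hS : S x = 0
    · have hq0 : (q k x).toReal = 0 :=
        le_antisymm (hS ▸ hq_le_S k x) ENNReal.toReal_nonneg
      rw [hq0, zero_mul]
      exact mul_nonneg ENNReal.toReal_nonneg (abs_nonneg _)
    · have hSpos : 0 < S x := lt_of_le_of_ne (hSnonneg x) (Ne.symm hS)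
      have hgabs : |g x| = (p x).toReal * |f x| / S x := by
        rw [hgdef]
        simp only []
        rw [abs_div, abs_mul, abs_of_nonneg ENNReal.toReal_nonneg,
          abs_of_nonneg (hSnonneg x)]
      rw [hgabs]
      have h1 : (q k x).toReal * ((p x).toReal * |f x| / S x)
          ≤ S x * ((p x).toReal * |f x| / S x) :=
        mul_le_mul_of_nonneg_right (hq_le_S k x) (by positivity)
      have h2 : S x * ((p x).toReal * |f x| / S x) = (p x).toReal * |f x| := by
        field_simp
      have h3 : (p x).toReal * |f x| ≤ (p x).toReal * |C| :=
        mul_le_mul_of_nonneg_left ((hfb x).trans (le_abs_self C)) ENNReal.toReal_nonneg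
      calc (q k x).toReal * ((p x).toReal * |f x| / S x)
          ≤ S x * ((p x).toReal * |f x| / S x) := h1
        _ = (p x).toReal * |f x| := h2
        _ ≤ (p x).toReal * |C| := h3
  have hint1 : ∀ k, Integrable (fun x => (q k x).toReal * g x) μ0 := by
    intro k
    refine Integrable.mono (hp_int.mul_const |C|)
      ((hq k).ennreal_toReal.mul hgmeas).aestronglyMeasurable
      (ae_of_all _ fun x => ?_)
    rw [Real.norm_eq_abs, Real.norm_eq_abs, abs_mul, abs_mul,
      abs_of_nonneg (ENNReal.toReal_nonneg (a := q k x)),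
      abs_of_nonneg (ENNReal.toReal_nonneg (a := p x)), abs_abs]
    exact key k x
  have hint_g : ∀ k, Integrable g (Q k) := by
    intro k
    rw [hQ k, integrable_withDensity_iff (hq k) (q_fin k)]
    have : (fun x => g x * (q k x).toReal) = fun x => (q k x).toReal * g x := by
      ext x; ring
    rw [this]
    exact hint1 k
  have mp : ∀ (k : Fin K) (i : Fin (N k)),
      MeasurePreserving (fun z : (k : Fin K) → Fin (N k) → Z => z k i) Pm (Q k) := fun k i =>
    (measurePreserving_eval_pi (fun _ : Fin (N k) => Q k) i).comp
      (measurePreserving_eval_pi (fun k : Fin K => Measure.pi fun _ : Fin (N k) => Q k) k)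
  have hint_comp : ∀ (k : Fin K) (i : Fin (N k)),
      Integrable (fun z : (k : Fin K) → Fin (N k) → Z => g (z k i)) Pm := fun k i =>
    ((mp k i).integrable_comp (hint_g k).aestronglyMeasurable).2 (hint_g k)
  have heval : ∀ (k : Fin K) (i : Fin (N k)),
      (∫ z : (k : Fin K) → Fin (N k) → Z, g (z k i) ∂Pm) = ∫ x, g x ∂(Q k) := by
    intro k i
    rw [← (mp k i).map_eq,
      integral_map (mp k i).measurable.aemeasurable hgmeas.aestronglyMeasurable]
  -- integral of g w.r.t. Q k in terms of μ0
  have hQint : ∀ k, (∫ x, g x ∂(Q k)) = ∫ x, (q k x).toReal * g x ∂μ0 := by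
    intro k
    have hcongr : Q k = μ0.withDensity (fun x => ((q k x).toNNReal : ℝ≥0∞)) := by
      rw [hQ k]
      apply withDensity_congr_ae
      filter_upwards [q_fin k] with x hx
      rw [ENNReal.coe_toNNReal hx.ne]
    rw [hcongr, integral_withDensity_eq_integral_smul (hq k).ennreal_toNNReal g]
    exact integral_congr_ae (ae_of_all _ fun x => by
      simp only [NNReal.smul_def, ENNReal.coe_toNNReal_eq_toReal, smul_eq_mul])
  -- right hand side
  have hRHS : ∫ z, f z ∂P = ∫ x, (p x).toReal * f x ∂μ0 := by
    have hcongr : P = μ0.withDensity (fun x => ((p x).toNNReal : ℝ≥0∞)) := by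
      rw [hP]
      apply withDensity_congr_ae
      filter_upwards [p_fin] with x hx
      rw [ENNReal.coe_toNNReal hx.ne]
    rw [hcongr, integral_withDensity_eq_integral_smul hp.ennreal_toNNReal f]
    exact integral_congr_ae (ae_of_all _ fun x => by
      simp only [NNReal.smul_def, ENNReal.coe_toNNReal_eq_toReal, smul_eq_mul])
  -- a.e. identity S * g = p.toReal * f
  have hae : (fun x => S x * g x) =ᵐ[μ0] fun x => (p x).toReal * f x := by
    filter_upwards [q_fin k0, hpz] with x hx hx0
    by_cases hS : S x = 0
    · have hq0 : (q k0 x).toReal = 0 :=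
        le_antisymm (hS ▸ hq_le_S k0 x) ENNReal.toReal_nonneg
      have hq0' : q k0 x = 0 := by
        rcases ENNReal.toReal_eq_zero_iff _ |>.1 hq0 with h | h
        · exact h
        · exact absurd h hx.ne
      have hp0 : p x = 0 := hx0 hq0'
      simp [hgdef, hS, hp0]
    · simp only [hgdef]
      field_simp
  calc
    ∫ z : (k : Fin K) → Fin (N k) → Z,
        ∑ k : Fin K, ∑ i : Fin (N k),
          ((p (z k i)).toReal * f (z k i)) /
            (∑ j : Fin K, (N j : ℝ) * (q j (z k i)).toReal) ∂Pm
        = ∑ k : Fin K, ∑ i : Fin (N k),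
            ∫ z : (k : Fin K) → Fin (N k) → Z, g (z k i) ∂Pm := by
          rw [integral_finset_sum _
            (fun k _ => integrable_finset_sum _ (fun i _ => hint_comp k i))]
          exact Finset.sum_congr rfl fun k _ =>
            integral_finset_sum _ fun i _ => hint_comp k i
    _ = ∑ k : Fin K, (N k : ℝ) * ∫ x, g x ∂(Q k) := by
          refine Finset.sum_congr rfl fun k _ => ?_
          simp only [heval k]
          rw [Finset.sum_const, Finset.card_univ, Fintype.card_fin, nsmul_eq_mul]
    _ = ∑ k : Fin K, ∫ x, (N k : ℝ) * ((q k x).toReal * g x) ∂μ0 := by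
          refine Finset.sum_congr rfl fun k _ => ?_
          rw [hQint k, integral_const_mul]
    _ = ∫ x, ∑ k : Fin K, (N k : ℝ) * ((q k x).toReal * g x) ∂μ0 := by
          rw [integral_finset_sum _ fun k _ => (hint1 k).const_mul _]
    _ = ∫ x, S x * g x ∂μ0 := by
          refine integral_congr_ae (ae_of_all _ fun x => ?_)
          simp only [hSdef, Finset.sum_mul]
          exact Finset.sum_congr rfl fun k _ => by ring
    _ = ∫ x, (p x).toReal * f x ∂μ0 := integral_congr_ae hae
    _ = ∫ z, f z ∂P := hRHS.symm
end

section
/- Combination of the two cases in the baseline-count bound: for reals Δ_k > 0, Δ_b > 0, α ∈ (0,1], μ_b > 0 and L > 0, let a_k = (1−α)μ_b − μ_k where μ_k = μ* − Δ_k and Δ_b = μ* − μ_b (so a_k = Δ_k − Δ_b − α μ_b). Then for any n ≥ 0: (i) if a_k > 0 and n ≤ L/Δ_k², then a_k·n + √(L·n) ≤ 2L/Δ_k; (ii) if a_k ≤ 0 then a_k·n + √(L·n) ≤ L/(4(Δ_b + αμ_b − Δ_k)) when Δ_b + αμ_b − Δ_k > 0. -/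
/-- Combination of the two cases in the baseline-count bound. With
`Δ_k = μ* − μ_k`, `Δ_b = μ* − μ_b` and `a_k = (1−α)μ_b − μ_k`:
(i) if `a_k > 0` and `n ≤ L/Δ_k²` then `a_k n + √(Ln) ≤ 2L/Δ_k`;
(ii) if `a_k ≤ 0` and `Δ_b + αμ_b − Δ_k > 0` then
`a_k n + √(Ln) ≤ L/(4(Δ_b + αμ_b − Δ_k))`. -/
theorem baseline_count_two_cases
    (μstar μb μk α L n : ℝ)
    (hΔk : 0 < μstar - μk) (hΔb : 0 ≤ μstar - μb)
    (hα0 : 0 < α) (hα1 : α ≤ 1) (hμb : 0 < μb) (hL : 0 < L) (hn : 0 ≤ n) :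
    ((1 - α) * μb - μk > 0 → n ≤ L / (μstar - μk) ^ 2 →
      ((1 - α) * μb - μk) * n + Real.sqrt (L * n) ≤ 2 * L / (μstar - μk)) ∧
    ((1 - α) * μb - μk ≤ 0 → (μstar - μb) + α * μb - (μstar - μk) > 0 →
      ((1 - α) * μb - μk) * n + Real.sqrt (L * n)
        ≤ L / (4 * ((μstar - μb) + α * μb - (μstar - μk)))) := by
  constructor
  · intro ha hnle
    set Δ := μstar - μk with hΔ
    have hnL : n ≤ L / Δ ^ 2 := hnle
    have hLn : L * n ≤ (L / Δ) ^ 2 := by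
      have := mul_le_mul_of_nonneg_left hnL hL.le
      calc L * n ≤ L * (L / Δ ^ 2) := this
        _ = (L / Δ) ^ 2 := by field_simp
    have hsqrt : Real.sqrt (L * n) ≤ L / Δ := by
      have h1 : Real.sqrt (L * n) ≤ Real.sqrt ((L / Δ) ^ 2) := Real.sqrt_le_sqrt hLn
      rwa [Real.sqrt_sq (by positivity)] at h1
    have haΔ : (1 - α) * μb - μk ≤ Δ := by nlinarith
    have h2 : ((1 - α) * μb - μk) * n ≤ L / Δ := by
      calc ((1 - α) * μb - μk) * n ≤ Δ * n := by nlinarith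
        _ ≤ Δ * (L / Δ ^ 2) := by nlinarith
        _ = L / Δ := by field_simp
    have : 2 * L / Δ = L / Δ + L / Δ := by ring
    linarith
  · intro ha hc
    set c := (μstar - μb) + α * μb - (μstar - μk) with hcdef
    have hac : (1 - α) * μb - μk = -c := by rw [hcdef]; ring
    have hs : Real.sqrt (L * n) ≤ c * n + L / (4 * c) := by
      have hrhs : (0:ℝ) ≤ c * n + L / (4 * c) := by positivity
      have hLn : L * n ≤ (c * n + L / (4 * c)) ^ 2 := by
        have h0 : (0:ℝ) ≤ (c * n - L / (4 * c)) ^ 2 := sq_nonneg _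
        have hcne : (4 * c) ≠ 0 := by positivity
        have key : (c * n + L / (4 * c)) ^ 2 - L * n = (c * n - L / (4 * c)) ^ 2 := by
          field_simp
          ring
        linarith
      have h1 : Real.sqrt (L * n) ≤ Real.sqrt ((c * n + L / (4 * c)) ^ 2) :=
        Real.sqrt_le_sqrt hLn
      rwa [Real.sqrt_sq hrhs] at h1
    rw [hac]
    linarith
end
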